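/- For rational measurement matrices and no variable bounds, the integral null space property coincides with the classical one: for A ∈ ℚ^{m×n}, the condition '‖v_S‖₁ < ‖v_{S̄}‖₁ for all nonzero v ∈ N(A) ∩ ℤⁿ and all |S| ≤ s' holds if and only if it holds for all nonzero v ∈ N(A) ∩ ℝⁿ. -/

import Mathlib

open Finset Matrix

private lemma exists_pseudoinv {p q : Type*} [Fintype p] [DecidableEq p] [Fintype q]
    [DecidableEq q] (B : Matrix p q ℚ) : ∃ C : Matrix q p ℚ, B * C * B = B := by
  set f : (q → ℚ) →ₗ[ℚ] (p → ℚ) := Matrix.toLin' B with hf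
  obtain ⟨Q, hQ⟩ := (LinearMap.range f).exists_isCompl
  set π : (p → ℚ) →ₗ[ℚ] LinearMap.range f :=
    Submodule.linearProjOfIsCompl _ _ hQ with hπ
  obtain ⟨g, hg⟩ := f.rangeRestrict.exists_rightInverse_of_surjective
    (LinearMap.range_rangeRestrict f)
  refine ⟨LinearMap.toMatrix' (g ∘ₗ π), ?_⟩
  apply Matrix.toLin'.injective
  rw [Matrix.toLin'_mul, Matrix.toLin'_mul, Matrix.toLin'_toMatrix']
  refine LinearMap.ext fun x => ?_
  have h1 : π (f x) = ⟨f x, LinearMap.mem_range_self f x⟩ :=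
    Submodule.linearProjOfIsCompl_apply_left hQ ⟨f x, LinearMap.mem_range_self f x⟩
  have h2 : ∀ y : LinearMap.range f, f (g y) = (y : p → ℚ) := by
    intro y
    have := congrArg (fun h => (h y : p → ℚ)) hg
    simpa using this
  simp only [LinearMap.comp_apply, ← hf, h1, h2]

private lemma cast_mulVec {p : Type*} [Fintype p] {n : ℕ} (B : Matrix p (Fin n) ℚ)
    (u : Fin n → ℚ) :
    (B.map (fun q : ℚ => (q : ℝ))).mulVec (fun i => ((u i : ℝ))) = fun j => ((B.mulVec u j : ℚ) : ℝ) := by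
  funext j
  have := RingHom.map_mulVec (Rat.castHom ℝ) B u j
  simpa [Function.comp_def] using this.symm

private lemma exists_rat_kernel_mem {p : Type*} [Fintype p] [DecidableEq p] {n : ℕ}
    (B : Matrix p (Fin n) ℚ) (v : Fin n → ℝ)
    (hv : (B.map (fun q : ℚ => (q : ℝ))).mulVec v = 0)
    {U : Set (Fin n → ℝ)} (hU : IsOpen U) (hvU : v ∈ U) :
    ∃ u : Fin n → ℚ, B *ᵥ u = 0 ∧ (fun i => ((u i : ℝ))) ∈ U := by
  obtain ⟨C, hC⟩ := exists_pseudoinv B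
  set M : Matrix (Fin n) (Fin n) ℚ := 1 - C * B with hM
  have hBM : B * M = 0 := by
    rw [hM, Matrix.mul_sub, Matrix.mul_one, ← Matrix.mul_assoc, hC, sub_self]
  set Mr : Matrix (Fin n) (Fin n) ℝ := M.map (fun q : ℚ => (q : ℝ)) with hMr
  have hMrv : Mr *ᵥ v = v := by
    have h1 : Mr = 1 - (C.map (fun q : ℚ => (q : ℝ))) * (B.map (fun q : ℚ => (q : ℝ))) := by
      rw [hMr, hM]
      have : ((C * B).map (fun q : ℚ => (q : ℝ)))
          = (C.map (fun q : ℚ => (q : ℝ))) * (B.map (fun q : ℚ => (q : ℝ))) :=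
        Matrix.map_mul (f := Rat.castHom ℝ)
      rw [Matrix.map_sub _ (by push_cast; intro a b; norm_cast), this]
      congr 1
      exact Matrix.map_one _ (by norm_cast) (by norm_cast)
    rw [h1, Matrix.sub_mulVec, Matrix.one_mulVec, ← Matrix.mulVec_mulVec, hv,
      Matrix.mulVec_zero, sub_zero]
  have hcont : Continuous fun x : Fin n → ℝ => Mr *ᵥ x :=
    continuous_const.matrix_mulVec continuous_id
  have hopen : IsOpen ((fun x : Fin n → ℝ => Mr *ᵥ x) ⁻¹' U) := hU.preimage hcont
  have hvmem : v ∈ (fun x : Fin n → ℝ => Mr *ᵥ x) ⁻¹' U := by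
    simp only [Set.mem_preimage, hMrv]; exact hvU
  obtain ⟨δ, hδ, hball⟩ := Metric.isOpen_iff.mp hopen v hvmem
  choose q hq using fun i => exists_rat_near (v i) hδ
  have hqball : (fun i => ((q i : ℝ))) ∈ Metric.ball v δ := by
    rw [Metric.mem_ball, dist_pi_lt_iff hδ]
    intro i
    rw [Real.dist_eq, abs_sub_comm]
    exact hq i
  refine ⟨M *ᵥ q, ?_, ?_⟩
  · rw [Matrix.mulVec_mulVec, hBM, Matrix.zero_mulVec]
  · have := hball hqball
    rw [Set.mem_preimage] at this
    rwa [hMr, cast_mulVec M q] at this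
private lemma exists_int_scale {n : ℕ} (u : Fin n → ℚ) :
    ∃ N : ℕ, 0 < N ∧ ∀ i, ∃ z : ℤ, ((N : ℚ) * u i) = z := by
  refine ⟨∏ i, (u i).den, Finset.prod_pos fun i _ => (u i).pos, fun i => ?_⟩
  obtain ⟨k, hk⟩ := Finset.dvd_prod_of_mem (fun i => (u i).den) (Finset.mem_univ i)
  refine ⟨(k : ℤ) * (u i).num, ?_⟩
  have h1 : ((u i).den : ℚ) * u i = (u i).num := Rat.den_mul_eq_num (u i)
  push_cast [hk]
  rw [mul_comm ((u i).den : ℚ) (k : ℚ), mul_assoc, h1]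
theorem integral_nsp_iff_classical_nsp_of_rational {m n : ℕ}
    (A : Matrix (Fin m) (Fin n) ℚ) (s : ℕ) :
    (∀ v : Fin n → ℝ, (∀ i, ∃ z : ℤ, v i = (z : ℝ)) →
        (A.map (fun q : ℚ => (q : ℝ))).mulVec v = 0 → v ≠ 0 →
        ∀ S : Finset (Fin n), S.card ≤ s →
          ∑ i ∈ S, |v i| < ∑ i ∈ Sᶜ, |v i|) ↔
    (∀ v : Fin n → ℝ,
        (A.map (fun q : ℚ => (q : ℝ))).mulVec v = 0 → v ≠ 0 →
        ∀ S : Finset (Fin n), S.card ≤ s →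
          ∑ i ∈ S, |v i| < ∑ i ∈ Sᶜ, |v i|) := by
  constructor
  · intro H v hAv hv0 S hS
    by_contra hlt
    push_neg at hlt
    classical
    set ε : Fin n → ℚ := fun i => if 0 ≤ v i then 1 else -1 with hε
    have hεv : ∀ i, ((ε i : ℝ)) * v i = |v i| := by
      intro i
      by_cases h : 0 ≤ v i
      · simp [hε, h, abs_of_nonneg h]
      · push_neg at h
        simp [hε, not_le.mpr h, abs_of_neg h]
    have hε1 : ∀ i, |(ε i : ℝ)| = 1 := by
      intro i; by_cases h : 0 ≤ v i <;> simp [hε, h]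
    set r : Fin n → ℚ := fun i => if i ∈ S then ε i else - ε i with hr
    have hsum : ∀ x : Fin n → ℝ, (∀ i, |x i| = (ε i : ℝ) * x i) →
        ∑ i, (r i : ℝ) * x i = ∑ i ∈ S, |x i| - ∑ i ∈ Sᶜ, |x i| := by
      intro x hx
      rw [← Finset.sum_add_sum_compl S (fun i => (r i : ℝ) * x i)]
      have h1 : ∑ i ∈ S, (r i : ℝ) * x i = ∑ i ∈ S, |x i| := by
        refine Finset.sum_congr rfl fun i hi => ?_
        rw [hx i, hr]; simp [hi]
      have h2 : ∑ i ∈ Sᶜ, (r i : ℝ) * x i = ∑ i ∈ Sᶜ, -|x i| := by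
        refine Finset.sum_congr rfl fun i hi => ?_
        have hiS : i ∉ S := Finset.mem_compl.mp hi
        rw [hx i, hr]
        simp [hiS]
      rw [h1, h2, Finset.sum_neg_distrib]
      ring
    set c : ℝ := ∑ i ∈ S, |v i| - ∑ i ∈ Sᶜ, |v i| with hc
    have hc0 : 0 ≤ c := sub_nonneg.mpr hlt
    set B : Matrix (Fin m ⊕ Fin n ⊕ Unit) (Fin n) ℚ :=
      Matrix.of (fun j i => match j with
        | Sum.inl j => A j i
        | Sum.inr (Sum.inl k) => if v k = 0 then (if i = k then 1 else 0) else 0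
        | Sum.inr (Sum.inr _) => if c = 0 then r i else 0) with hB
    have hvsum : ∑ i, (r i : ℝ) * v i = c := hsum v (fun i => (hεv i).symm)
    have hBv : (B.map (fun q : ℚ => (q : ℝ))).mulVec v = 0 := by
      funext j
      rcases j with j | k | _
      · have := congrFun hAv j
        simpa [Matrix.mulVec, dotProduct, Matrix.map_apply, hB] using this
      · by_cases hk : v k = 0
        · simp [Matrix.mulVec, dotProduct, Matrix.map_apply, hB, hk,
            apply_ite (fun q : ℚ => (q : ℝ)), ite_mul, Finset.sum_ite_eq']
        · simp [Matrix.mulVec, dotProduct, Matrix.map_apply, hB, hk]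
      · by_cases hcz : c = 0
        · have : ∑ i, (r i : ℝ) * v i = 0 := by rw [hvsum, hcz]
          simpa [Matrix.mulVec, dotProduct, Matrix.map_apply, hB, hcz] using this
        · simp [Matrix.mulVec, dotProduct, Matrix.map_apply, hB, hcz]
    set U : Set (Fin n → ℝ) :=
      {x | (∀ i, v i ≠ 0 → 0 < (ε i : ℝ) * x i) ∧ (c = 0 ∨ 0 < ∑ i, (r i : ℝ) * x i)} with hU
    have hUopen : IsOpen U := by
      rw [hU, Set.setOf_and]
      have h1 : IsOpen {x : Fin n → ℝ | ∀ i, v i ≠ 0 → 0 < (ε i : ℝ) * x i} := by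
        have he : {x : Fin n → ℝ | ∀ i, v i ≠ 0 → 0 < (ε i : ℝ) * x i}
            = ⋂ i, {x : Fin n → ℝ | v i ≠ 0 → 0 < (ε i : ℝ) * x i} := by
          ext x; simp [Set.mem_iInter]
        rw [he]
        refine isOpen_iInter_of_finite fun i => ?_
        by_cases hvi : v i = 0
        · simp [hvi]
        · have he2 : {x : Fin n → ℝ | v i ≠ 0 → 0 < (ε i : ℝ) * x i}
              = {x : Fin n → ℝ | 0 < (ε i : ℝ) * x i} := by ext x; simp [hvi]
          rw [he2]
          exact isOpen_lt continuous_const (continuous_const.mul (continuous_apply i))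
      have h2 : IsOpen {x : Fin n → ℝ | c = 0 ∨ 0 < ∑ i, (r i : ℝ) * x i} := by
        by_cases hcz : c = 0
        · have : {x : Fin n → ℝ | c = 0 ∨ 0 < ∑ i, (r i : ℝ) * x i} = Set.univ := by
            ext x; simp [hcz]
          rw [this]; exact isOpen_univ
        · have he3 : {x : Fin n → ℝ | c = 0 ∨ 0 < ∑ i, (r i : ℝ) * x i}
              = {x : Fin n → ℝ | 0 < ∑ i, (r i : ℝ) * x i} := by ext x; simp [hcz]
          rw [he3]
          exact isOpen_lt continuous_const
            (continuous_finset_sum _ fun i _ => continuous_const.mul (continuous_apply i))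
      exact h1.inter h2
    have hvU : v ∈ U := by
      refine ⟨fun i hvi => ?_, ?_⟩
      · rw [hεv i]; exact abs_pos.mpr hvi
      · rcases hc0.eq_or_lt with h | h
        · exact Or.inl h.symm
        · exact Or.inr (by rw [hvsum]; exact h)
    obtain ⟨u, hBu, huU⟩ := exists_rat_kernel_mem B v hBv hUopen hvU
    set w : Fin n → ℝ := fun i => ((u i : ℝ)) with hw
    have hBw : (B.map (fun q : ℚ => (q : ℝ))).mulVec w = 0 := by
      rw [hw, cast_mulVec]
      funext j
      rw [congrFun hBu j]
      simp
    obtain ⟨hpos, hcase⟩ := huU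
    have hAw : (A.map (fun q : ℚ => (q : ℝ))).mulVec w = 0 := by
      funext j
      have := congrFun hBw (Sum.inl j)
      simpa [Matrix.mulVec, dotProduct, Matrix.map_apply, hB] using this
    have hw0' : ∀ k, v k = 0 → w k = 0 := by
      intro k hk
      have := congrFun hBw (Sum.inr (Sum.inl k))
      simpa [Matrix.mulVec, dotProduct, Matrix.map_apply, hB, hk,
        apply_ite (fun q : ℚ => (q : ℝ)), ite_mul, Finset.sum_ite_eq'] using this
    have hLw0 : c = 0 → ∑ i, (r i : ℝ) * w i = 0 := by
      intro hcz
      have := congrFun hBw (Sum.inr (Sum.inr ()))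
      simpa [Matrix.mulVec, dotProduct, Matrix.map_apply, hB, hcz] using this
    have habs : ∀ i, |w i| = (ε i : ℝ) * w i := by
      intro i
      by_cases hvi : v i = 0
      · rw [hw0' i hvi]; simp
      · have h := hpos i hvi
        calc |w i| = |(ε i : ℝ)| * |w i| := by rw [hε1 i, one_mul]
        _ = |(ε i : ℝ) * w i| := (abs_mul _ _).symm
        _ = (ε i : ℝ) * w i := abs_of_pos h
    have hLge : 0 ≤ ∑ i, (r i : ℝ) * w i := by
      rcases hcase with h | h
      · rw [hLw0 h]
      · exact le_of_lt h
    obtain ⟨i0, hi0⟩ := Function.ne_iff.mp hv0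
    have hwi0 : w i0 ≠ 0 := by
      intro h
      have := hpos i0 hi0
      rw [h, mul_zero] at this
      exact lt_irrefl 0 this
    obtain ⟨N, hN, hNz⟩ := exists_int_scale u
    set z : Fin n → ℝ := fun i => (N : ℝ) * w i with hz
    have hz_int : ∀ i, ∃ t : ℤ, z i = (t : ℝ) := by
      intro i
      obtain ⟨t, ht⟩ := hNz i
      refine ⟨t, ?_⟩
      rw [hz, hw]
      have := congrArg (fun q : ℚ => (q : ℝ)) ht
      push_cast at this ⊢
      exact this
    have hz_ker : (A.map (fun q : ℚ => (q : ℝ))).mulVec z = 0 := by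
      have hzs : z = (N : ℝ) • w := by funext i; simp [hz, hw]
      rw [hzs, Matrix.mulVec_smul, hAw, smul_zero]
    have hz0 : z ≠ 0 := by
      intro h
      have := congrFun h i0
      rw [hz] at this
      simp only [Pi.zero_apply] at this
      rcases mul_eq_zero.mp this with h' | h'
      · exact (Nat.cast_pos.mpr hN).ne' h'
      · exact hwi0 h'
    have hzlt := H z hz_int hz_ker hz0 S hS
    have habz : ∀ i, |z i| = (N : ℝ) * |w i| := by
      intro i
      rw [hz, abs_mul, abs_of_nonneg (by positivity : (0:ℝ) ≤ (N:ℝ))]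
    have hwge : ∑ i ∈ Sᶜ, |w i| ≤ ∑ i ∈ S, |w i| := by
      have := hsum w habs
      linarith [hLge, this]
    have : ∑ i ∈ Sᶜ, |z i| ≤ ∑ i ∈ S, |z i| := by
      simp only [habz, ← Finset.mul_sum]
      exact mul_le_mul_of_nonneg_left hwge (by positivity)
    exact absurd hzlt (not_lt.mpr this)
  · intro H v _ h1 h2 S hS
    exact H v h1 h2 S hS
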